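/- If the two-weight norm inequality ‖(I_{α,β}f) w‖_{L^q(ℝ^{m+n})} ≤ N ‖f w‖_{L^p(ℝ^{m+n})} holds for some weight w (one-weight case v = w) with finite constant N, where 1<p,q<∞ and α,β>0, then necessarily 1/p − 1/q = α/m = β/n. -/

import Mathlib

open MeasureTheory ENNReal

noncomputable section

abbrev E (m : ℕ) := EuclideanSpace ℝ (Fin m)

/-- The product fractional integral kernel in `ℝ≥0∞`. -/
noncomputable def prodKernel (m n : ℕ) (α β : ℝ) (z z' : E m × E n) : ℝ≥0∞ :=
  (ENNReal.ofReal ‖z.1 - z'.1‖) ^ (α - (m : ℝ)) * (ENNReal.ofReal ‖z.2 - z'.2‖) ^ (β - (n : ℝ))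

/-- The product fractional integral `I_{α,β}^{m,n} f`. -/
noncomputable def Iab (m n : ℕ) (α β : ℝ) (f : E m × E n → ℝ≥0∞) (z : E m × E n) : ℝ≥0∞ :=
  ∫⁻ z', prodKernel m n α β z z' * f z'

section AuxLemmas

open Metric Set


lemma aux_rpow_ne_top {x : ℝ≥0∞} (hx0 : x ≠ 0) (hxt : x ≠ ∞) (t : ℝ) : x ^ t ≠ ∞ := by
  rcases le_or_gt 0 t with ht | ht
  · exact ENNReal.rpow_ne_top_of_nonneg ht hxt
  · rw [show t = -(-t) by ring, ENNReal.rpow_neg]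
    exact ENNReal.inv_ne_top.2 (ENNReal.rpow_pos (pos_iff_ne_zero.2 hx0) hxt).ne'

lemma aux_rpow_anti {x y : ℝ≥0∞} (hxy : x ≤ y) {γ : ℝ} (hγ : γ ≤ 0) :
    y ^ γ ≤ x ^ γ := by
  calc y ^ γ = (y ^ (-γ))⁻¹ := by rw [← ENNReal.rpow_neg, neg_neg]
    _ ≤ (x ^ (-γ))⁻¹ := ENNReal.inv_le_inv.2 (ENNReal.rpow_le_rpow hxy (neg_nonneg.2 hγ))
    _ = x ^ γ := by rw [← ENNReal.rpow_neg, neg_neg]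

lemma aux_iSup_rpow {A : ℕ → ℝ≥0∞} {c : ℝ} (hc : 0 < c) :
    (⨆ k, A k) ^ c = ⨆ k, (A k) ^ c := by
  refine le_antisymm ?_ (iSup_le fun k => ENNReal.rpow_le_rpow (le_iSup A k) hc.le)
  have h1 : ∀ k, A k ≤ (⨆ k, (A k) ^ c) ^ (1/c) := by
    intro k
    have : A k = ((A k) ^ c) ^ (1/c) := by
      rw [← ENNReal.rpow_mul, mul_one_div_cancel hc.ne', ENNReal.rpow_one]
    rw [this]
    exact ENNReal.rpow_le_rpow (le_iSup (fun k => (A k) ^ c) k) (by positivity)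
  calc (⨆ k, A k) ^ c ≤ ((⨆ k, (A k) ^ c) ^ (1/c)) ^ c :=
        ENNReal.rpow_le_rpow (iSup_le h1) hc.le
    _ = ⨆ k, (A k) ^ c := by
        rw [← ENNReal.rpow_mul, one_div_mul_cancel hc.ne', ENNReal.rpow_one]

lemma aux_min_sup (x : ℝ≥0∞) : ⨆ (k : ℕ), min x ((k : ℝ≥0∞) + 1) = x := by
  apply le_antisymm (iSup_le fun k => min_le_left _ _)
  rcases eq_or_ne x ∞ with rfl | hx
  · calc (⊤:ℝ≥0∞) = ⨆ (k:ℕ), (k:ℝ≥0∞) := ENNReal.iSup_natCast.symm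
      _ ≤ _ := iSup_mono fun k => le_min le_top (by simp)
  · obtain ⟨k, hk⟩ := ENNReal.exists_nat_gt hx
    exact le_iSup_of_le k (by rw [min_eq_left (hk.le.trans (by simp))])

lemma aux_exp_zero {t : ℝ} {C D : ℝ≥0∞} (hC0 : C ≠ 0) (hCt : C ≠ ∞) (hD : D ≠ ∞)
    (h : ∀ r : ℝ, 0 < r → C * (ENNReal.ofReal r) ^ t ≤ D) : t = 0 := by
  by_contra ht
  set V : ℝ≥0∞ := (D + 1) / C with hV
  have hV0 : V ≠ 0 := by
    simp only [hV, ne_eq, ENNReal.div_eq_zero_iff, not_or]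
    exact ⟨by simp, hCt⟩
  have hVt : V ≠ ∞ := (ENNReal.div_lt_top (by simp [hD]) hC0).ne
  set r : ℝ := (V ^ (1/t)).toReal with hr
  have hVp : V ^ (1/t) ≠ 0 := (ENNReal.rpow_pos (pos_iff_ne_zero.2 hV0) hVt).ne'
  have hVpt : V ^ (1/t) ≠ ∞ := aux_rpow_ne_top hV0 hVt _
  have hrpos : 0 < r := ENNReal.toReal_pos hVp hVpt
  have hor : ENNReal.ofReal r = V ^ (1/t) := ENNReal.ofReal_toReal hVpt
  have := h r hrpos
  rw [hor, ← ENNReal.rpow_mul, one_div_mul_cancel ht, ENNReal.rpow_one, hV,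
    ENNReal.mul_div_cancel hC0 hCt] at this
  exact absurd this (by simp [ENNReal.lt_add_right hD one_ne_zero] : ¬ (D + 1 ≤ D))

lemma aux_holder {X : Type*} [MeasurableSpace X] (μ : Measure X) {w : X → ℝ≥0∞}
    (hwm : Measurable w) (hw : ∀ z, w z ≠ 0 ∧ w z ≠ ∞) {p' q : ℝ} (hp' : 0 < p') (hq : 0 < q) :
    (μ Set.univ) ^ (1/q + 1/p') ≤
      (∫⁻ z, w z ^ q ∂μ) ^ (1/q) * (∫⁻ z, w z ^ (-p') ∂μ) ^ (1/p') := by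
  set c : ℝ := 1/q + 1/p' with hc
  have hcpos : 0 < c := by positivity
  have hab : (c*q).HolderConjugate (c*p') := by
    rw [Real.holderConjugate_iff]
    constructor
    · have : c * q = 1 + q/p' := by rw [hc, add_mul, one_div_mul_cancel hq.ne']; ring
      rw [this]; nlinarith [div_pos hq hp']
    · rw [hc]; field_simp
  have hfm : AEMeasurable (fun z => w z ^ (1/c)) μ :=
    (ENNReal.continuous_rpow_const.measurable.comp hwm).aemeasurable
  have hgm : AEMeasurable (fun z => w z ^ (-(1/c))) μ :=
    (ENNReal.continuous_rpow_const.measurable.comp hwm).aemeasurable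
  have key := ENNReal.lintegral_mul_le_Lp_mul_Lq μ hab hfm hgm
  have h1 : ∀ z, (fun z => w z ^ (1/c)) z * (fun z => w z ^ (-(1/c))) z = 1 := by
    intro z
    rw [← ENNReal.rpow_add _ _ (hw z).1 (hw z).2, add_neg_cancel, ENNReal.rpow_zero]
  rw [show (fun z => w z ^ (1/c)) * (fun z => w z ^ (-(1/c))) = fun _ => (1:ℝ≥0∞) from
    funext fun z => h1 z] at key
  simp only [lintegral_one] at key
  have h2 : ∀ z, ((w z) ^ (1/c)) ^ (c*q) = w z ^ q := by
    intro z; rw [← ENNReal.rpow_mul]; congr 1; field_simp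
  have h3 : ∀ z, ((w z) ^ (-(1/c))) ^ (c*p') = w z ^ (-p') := by
    intro z; rw [← ENNReal.rpow_mul]; congr 1; field_simp
  simp only [h2, h3] at key
  calc (μ Set.univ) ^ c ≤ ((∫⁻ z, w z ^ q ∂μ) ^ (1/(c*q)) * (∫⁻ z, w z ^ (-p') ∂μ) ^ (1/(c*p'))) ^ c :=
        ENNReal.rpow_le_rpow key hcpos.le
    _ = _ := by
        rw [ENNReal.mul_rpow_of_nonneg _ _ hcpos.le, ← ENNReal.rpow_mul, ← ENNReal.rpow_mul]
        congr 2 <;> field_simp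

lemma key_testing (m n : ℕ) (α β p q p' : ℝ) (hp : 1 < p) (hq : 1 < q)
    (hp'def : p' = p / (p - 1))
    (w : E m × E n → ℝ≥0∞) (hwm : Measurable w) (hw : ∀ z, 0 < w z ∧ w z < ∞)
    (N' : ℝ≥0∞)
    (hineq : ∀ f : E m × E n → ℝ≥0∞, Measurable f →
      (∫⁻ z, (Iab m n α β f z * w z) ^ q) ^ (1 / q) ≤ N' * (∫⁻ z, (f z * w z) ^ p) ^ (1 / p))
    (x₀ x₁ : E m) (y₀ y₁ : E n) (r r' : ℝ) (hr : 0 < r) (hr' : 0 < r')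
    (hx : ‖x₁ - x₀‖ = 3*r) (hy : ‖y₁ - y₀‖ = 3*r') :
    (min ((ENNReal.ofReal r) ^ (α - (m:ℝ))) ((ENNReal.ofReal (5*r)) ^ (α - (m:ℝ)))) *
    (min ((ENNReal.ofReal r') ^ (β - (n:ℝ))) ((ENNReal.ofReal (5*r')) ^ (β - (n:ℝ)))) *
    ((∫⁻ z in (ball x₁ r) ×ˢ (ball y₁ r'), (w z) ^ (-p')) ^ (1/p') *
     (∫⁻ z in (ball x₀ r) ×ˢ (ball y₀ r'), (w z) ^ q) ^ (1/q)) ≤ N' := by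
  have hp0 : 0 < p := lt_trans one_pos hp
  have hq0 : 0 < q := lt_trans one_pos hq
  have hp1 : (0:ℝ) < p - 1 := by linarith
  have hp'pos : 0 < p' := by rw [hp'def]; positivity
  have hsum : 1/p' + 1/p = 1 := by rw [hp'def]; field_simp; ring
  set γ₁ : ℝ := α - (m:ℝ) with hγ₁
  set γ₂ : ℝ := β - (n:ℝ) with hγ₂
  set K1 : ℝ≥0∞ := min ((ENNReal.ofReal r) ^ γ₁) ((ENNReal.ofReal (5*r)) ^ γ₁) with hK1
  set K2 : ℝ≥0∞ := min ((ENNReal.ofReal r') ^ γ₂) ((ENNReal.ofReal (5*r')) ^ γ₂) with hK2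
  set S : Set (E m × E n) := (ball x₁ r) ×ˢ (ball y₁ r') with hSdef
  set T : Set (E m × E n) := (ball x₀ r) ×ˢ (ball y₀ r') with hTdef
  have hS : MeasurableSet S := measurableSet_ball.prod measurableSet_ball
  have hT : MeasurableSet T := measurableSet_ball.prod measurableSet_ball
  have hvolS : volume S = volume (ball x₁ r) * volume (ball y₁ r') := by
    rw [hSdef, Measure.volume_eq_prod, Measure.prod_prod]
  have hvolS0 : volume S ≠ 0 := by
    rw [hvolS]
    exact (ENNReal.mul_pos (measure_ball_pos _ _ hr).ne' (measure_ball_pos _ _ hr').ne').ne'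
  have hvolSt : volume S ≠ ∞ := by
    rw [hvolS]; exact (ENNReal.mul_lt_top measure_ball_lt_top measure_ball_lt_top).ne
  -- kernel lower bound
  have hker : ∀ z ∈ T, ∀ z' ∈ S, K1 * K2 ≤ prodKernel m n α β z z' := by
    rintro ⟨z1, z2⟩ hz ⟨z1', z2'⟩ hz'
    obtain ⟨hz1, hz2⟩ := hz
    obtain ⟨hz1', hz2'⟩ := hz'
    simp only [mem_ball] at hz1 hz2 hz1' hz2'
    have hd1 : dist x₀ x₁ = 3*r := by rw [dist_comm, dist_eq_norm]; exact hx
    have hd2 : dist y₀ y₁ = 3*r' := by rw [dist_comm, dist_eq_norm]; exact hy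
    have t1 : dist x₀ x₁ ≤ dist x₀ z1 + dist z1 z1' + dist z1' x₁ := dist_triangle4 _ _ _ _
    have t2 : dist z1 z1' ≤ dist z1 x₀ + dist x₀ x₁ + dist x₁ z1' := dist_triangle4 _ _ _ _
    have t3 : dist y₀ y₁ ≤ dist y₀ z2 + dist z2 z2' + dist z2' y₁ := dist_triangle4 _ _ _ _
    have t4 : dist z2 z2' ≤ dist z2 y₀ + dist y₀ y₁ + dist y₁ z2' := dist_triangle4 _ _ _ _
    rw [dist_comm x₀ z1] at t1
    rw [dist_comm x₁ z1'] at t2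
    rw [dist_comm y₀ z2] at t3
    rw [dist_comm y₁ z2'] at t4
    have hl1 : r ≤ ‖z1 - z1'‖ := by rw [← dist_eq_norm]; linarith
    have hu1 : ‖z1 - z1'‖ ≤ 5*r := by rw [← dist_eq_norm]; linarith
    have hl2 : r' ≤ ‖z2 - z2'‖ := by rw [← dist_eq_norm]; linarith
    have hu2 : ‖z2 - z2'‖ ≤ 5*r' := by rw [← dist_eq_norm]; linarith
    have c1 : K1 ≤ (ENNReal.ofReal ‖z1 - z1'‖) ^ γ₁ := by
      rcases le_or_gt 0 γ₁ with hγ | hγ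
      · exact (min_le_left _ _).trans (ENNReal.rpow_le_rpow (ENNReal.ofReal_le_ofReal hl1) hγ)
      · exact (min_le_right _ _).trans (aux_rpow_anti (ENNReal.ofReal_le_ofReal hu1) hγ.le)
    have c2 : K2 ≤ (ENNReal.ofReal ‖z2 - z2'‖) ^ γ₂ := by
      rcases le_or_gt 0 γ₂ with hγ | hγ
      · exact (min_le_left _ _).trans (ENNReal.rpow_le_rpow (ENNReal.ofReal_le_ofReal hl2) hγ)
      · exact (min_le_right _ _).trans (aux_rpow_anti (ENNReal.ofReal_le_ofReal hu2) hγ.le)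
    exact mul_le_mul' c1 c2
  -- the main per-k inequality
  set Wq : ℝ≥0∞ := ∫⁻ z in T, (w z) ^ q with hWq
  have hWqm : Measurable fun z => (w z) ^ q :=
    ENNReal.continuous_rpow_const.measurable.comp hwm
  have hwp'm : Measurable fun z => (w z) ^ (-p') :=
    ENNReal.continuous_rpow_const.measurable.comp hwm
  have main : ∀ k : ℕ,
      K1 * K2 * (∫⁻ z in S, min ((w z) ^ (-p')) ((k:ℝ≥0∞)+1)) ^ (1/p') * Wq ^ (1/q) ≤ N' := by
    intro k
    set g : E m × E n → ℝ≥0∞ := fun z => min ((w z) ^ (-p')) ((k:ℝ≥0∞)+1) with hgdef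
    have hgm : Measurable g := hwp'm.min measurable_const
    have hgpos : ∀ z, 0 < g z := fun z =>
      lt_min (ENNReal.rpow_pos (hw z).1 (hw z).2.ne)
        (lt_of_lt_of_le one_pos le_add_self)
    have hgfin : ∀ z, g z < ∞ := fun z =>
      (min_le_right _ _).trans_lt (by simp [lt_top_iff_ne_top])
    set f : E m × E n → ℝ≥0∞ := S.indicator g with hfdef
    have hfm : Measurable f := hgm.indicator hS
    set A : ℝ≥0∞ := ∫⁻ z in S, g z with hA
    have hA0 : A ≠ 0 := by
      rw [hA, ← pos_iff_ne_zero, lintegral_pos_iff_support hgm]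
      have : Function.support g = Set.univ := Set.eq_univ_iff_forall.2 fun z => (hgpos z).ne'
      rw [this, Measure.restrict_apply_univ]
      exact pos_iff_ne_zero.2 hvolS0
    have hAt : A ≠ ∞ := by
      have : A ≤ ((k:ℝ≥0∞)+1) * volume S := by
        rw [hA, ← setLIntegral_const S ((k:ℝ≥0∞)+1)]
        exact setLIntegral_mono' hS fun z _ => min_le_right _ _
      exact (this.trans_lt (ENNReal.mul_lt_top (by simp [lt_top_iff_ne_top])
        (lt_top_iff_ne_top.2 hvolSt))).ne
    -- step 1 : pointwise lower bound for Iab f on T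
    have step1 : ∀ z ∈ T, K1 * K2 * A ≤ Iab m n α β f z := by
      intro z hz
      have heq : (fun z' => prodKernel m n α β z z' * f z')
          = S.indicator (fun z' => prodKernel m n α β z z' * g z') := by
        funext z'
        by_cases hz' : z' ∈ S
        · simp [hfdef, Set.indicator_of_mem hz']
        · simp [hfdef, Set.indicator_of_notMem hz']
      rw [Iab, heq, lintegral_indicator hS]
      calc K1 * K2 * A = ∫⁻ z' in S, K1 * K2 * g z' := by
            rw [hA, lintegral_const_mul _ hgm]
        _ ≤ ∫⁻ z' in S, prodKernel m n α β z z' * g z' :=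
            setLIntegral_mono' hS fun z' hz' => mul_le_mul_left (hker z hz z' hz') _
    -- step 2 : lower bound for the LHS of hineq
    have step2 : K1 * K2 * A * Wq ^ (1/q) ≤ (∫⁻ z, (Iab m n α β f z * w z) ^ q) ^ (1/q) := by
      have h1 : ∫⁻ z in T, (K1 * K2 * A * w z) ^ q ≤ ∫⁻ z, (Iab m n α β f z * w z) ^ q := by
        refine le_trans (setLIntegral_mono' hT fun z hz => ?_) (setLIntegral_le_lintegral T _)
        exact ENNReal.rpow_le_rpow (mul_le_mul_left (step1 z hz) _) hq0.le
      have h2 : ∫⁻ z in T, (K1 * K2 * A * w z) ^ q = (K1 * K2 * A) ^ q * Wq := by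
        rw [hWq, ← lintegral_const_mul _ hWqm]
        congr 1
        funext z
        rw [ENNReal.mul_rpow_of_nonneg _ _ hq0.le]
      calc K1 * K2 * A * Wq ^ (1/q)
          = ((K1 * K2 * A) ^ q * Wq) ^ (1/q) := by
            rw [ENNReal.mul_rpow_of_nonneg _ _ (by positivity : (0:ℝ) ≤ 1/q),
              ← ENNReal.rpow_mul, mul_one_div_cancel hq0.ne', ENNReal.rpow_one]
        _ ≤ (∫⁻ z, (Iab m n α β f z * w z) ^ q) ^ (1/q) := by
            rw [← h2]; exact ENNReal.rpow_le_rpow h1 (by positivity)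
    -- step 3 : upper bound for the RHS of hineq
    have step3 : ∫⁻ z, (f z * w z) ^ p ≤ A := by
      have hpt : ∀ z, (f z * w z) ^ p ≤ f z := by
        intro z
        by_cases hz : z ∈ S
        · simp only [hfdef, Set.indicator_of_mem hz]
          have e1 : (g z * w z) ^ p = g z ^ p * w z ^ p :=
            ENNReal.mul_rpow_of_nonneg _ _ hp0.le
          have e2 : g z ^ p = g z * g z ^ (p-1) := by
            calc g z ^ p = g z ^ (1 + (p-1)) := by norm_num
              _ = g z ^ (1:ℝ) * g z ^ (p-1) :=
                  ENNReal.rpow_add _ _ (hgpos z).ne' (hgfin z).ne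
              _ = g z * g z ^ (p-1) := by rw [ENNReal.rpow_one]
          have e3 : g z ^ (p-1) ≤ (w z) ^ (-p) := by
            calc g z ^ (p-1) ≤ ((w z) ^ (-p')) ^ (p-1) :=
                  ENNReal.rpow_le_rpow (min_le_left _ _) (by linarith)
              _ = (w z) ^ (-p) := by
                  rw [← ENNReal.rpow_mul]
                  congr 1
                  rw [hp'def]
                  field_simp
          calc (g z * w z) ^ p = g z * (g z ^ (p-1) * w z ^ p) := by rw [e1, e2]; ring
            _ ≤ g z * ((w z) ^ (-p) * w z ^ p) :=
                mul_le_mul_right (mul_le_mul_left e3 _) _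
            _ = g z := by
                rw [← ENNReal.rpow_add _ _ (hw z).1.ne' (hw z).2.ne, neg_add_cancel,
                  ENNReal.rpow_zero, mul_one]
        · simp [hfdef, Set.indicator_of_notMem hz, ENNReal.zero_rpow_of_pos hp0]
      calc ∫⁻ z, (f z * w z) ^ p ≤ ∫⁻ z, f z := lintegral_mono hpt
        _ = A := by rw [hfdef, lintegral_indicator hS]
    -- combine
    have step4 : K1 * K2 * A * Wq ^ (1/q) ≤ N' * A ^ (1/p) :=
      step2.trans ((hineq f hfm).trans
        (mul_le_mul_right (ENNReal.rpow_le_rpow step3 (by positivity)) N'))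
    have hAsplit : A = A ^ (1/p') * A ^ (1/p) := by
      rw [← ENNReal.rpow_add _ _ hA0 hAt, hsum, ENNReal.rpow_one]
    have hApow0 : A ^ (1/p) ≠ 0 := (ENNReal.rpow_pos (pos_iff_ne_zero.2 hA0) hAt).ne'
    have hApowt : A ^ (1/p) ≠ ∞ := aux_rpow_ne_top hA0 hAt _
    rw [← ENNReal.mul_le_mul_iff_left hApow0 hApowt]
    calc K1 * K2 * A ^ (1/p') * Wq ^ (1/q) * A ^ (1/p)
        = K1 * K2 * (A ^ (1/p') * A ^ (1/p)) * Wq ^ (1/q) := by ring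
      _ = K1 * K2 * A * Wq ^ (1/q) := by rw [← hAsplit]
      _ ≤ N' * A ^ (1/p) := step4
  -- pass to the limit k → ∞
  have hMono : Monotone fun (k:ℕ) (z : E m × E n) => min ((w z) ^ (-p')) ((k:ℝ≥0∞)+1) := by
    intro i j hij
    exact fun z => min_le_min le_rfl (add_le_add (Nat.cast_le.mpr hij) le_rfl)
  have hlim : (∫⁻ z in S, (w z) ^ (-p'))
      = ⨆ k : ℕ, ∫⁻ z in S, min ((w z) ^ (-p')) ((k:ℝ≥0∞)+1) := by
    rw [← lintegral_iSup (fun k => hwp'm.min measurable_const) hMono]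
    congr 1
    funext z
    exact (aux_min_sup _).symm
  calc K1 * K2 * ((∫⁻ z in S, (w z) ^ (-p')) ^ (1/p') * Wq ^ (1/q))
      = K1 * K2 * (∫⁻ z in S, (w z) ^ (-p')) ^ (1/p') * Wq ^ (1/q) := by ring
    _ = ⨆ k : ℕ, K1 * K2 *
          (∫⁻ z in S, min ((w z) ^ (-p')) ((k:ℝ≥0∞)+1)) ^ (1/p') * Wq ^ (1/q) := by
        rw [hlim, aux_iSup_rpow (by positivity : (0:ℝ) < 1/p'), ENNReal.mul_iSup,
          ENNReal.iSup_mul]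
    _ ≤ N' := iSup_le main

lemma aux_scaling (γ : ℝ) (m : ℕ) (c : ℝ) (Cother B N2 : ℝ≥0∞)
    (hCo0 : Cother ≠ 0) (hCot : Cother ≠ ∞) (hB0 : B ≠ 0) (hBt : B ≠ ∞) (hN2 : N2 ≠ ∞)
    (hbd : ∀ r : ℝ, 0 < r →
      (min ((ENNReal.ofReal r) ^ γ) ((ENNReal.ofReal (5*r)) ^ γ)) *
      (min ((ENNReal.ofReal r) ^ γ) ((ENNReal.ofReal (5*r)) ^ γ)) *
      ((ENNReal.ofReal (r^m) * B) ^ c * (ENNReal.ofReal (r^m) * B) ^ c) * Cother ≤ N2) :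
    γ + (m:ℝ) * c = 0 := by
  set M5 : ℝ≥0∞ := min 1 ((ENNReal.ofReal 5) ^ γ) with hM5
  have hM50 : M5 ≠ 0 := (lt_min one_pos
    (ENNReal.rpow_pos (ENNReal.ofReal_pos.2 (by norm_num)) ENNReal.ofReal_ne_top)).ne'
  have hM5t : M5 ≠ ∞ := ((min_le_left _ _).trans_lt one_lt_top).ne
  have hBc0 : B ^ c ≠ 0 := (ENNReal.rpow_pos (pos_iff_ne_zero.2 hB0) hBt).ne'
  have hBct : B ^ c ≠ ∞ := aux_rpow_ne_top hB0 hBt c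
  set C : ℝ≥0∞ := (M5 * M5) * (B ^ c * B ^ c) * Cother with hC
  have hC0 : C ≠ 0 :=
    mul_ne_zero (mul_ne_zero (mul_ne_zero hM50 hM50) (mul_ne_zero hBc0 hBc0)) hCo0
  have hCt : C ≠ ∞ :=
    ENNReal.mul_ne_top (ENNReal.mul_ne_top (ENNReal.mul_ne_top hM5t hM5t)
      (ENNReal.mul_ne_top hBct hBct)) hCot
  have hmain : 2 * (γ + (m:ℝ)*c) = 0 := by
    apply aux_exp_zero hC0 hCt hN2
    intro r hr
    have hr0 : ENNReal.ofReal r ≠ 0 := (ENNReal.ofReal_pos.2 hr).ne'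
    have hKm : ENNReal.ofReal r ^ γ * M5
        ≤ min ((ENNReal.ofReal r) ^ γ) ((ENNReal.ofReal (5*r)) ^ γ) := by
      refine le_min ?_ ?_
      · exact (mul_le_mul_right (min_le_left _ _) _).trans_eq (mul_one _)
      · have h5 : (ENNReal.ofReal (5*r)) ^ γ = (ENNReal.ofReal 5) ^ γ * (ENNReal.ofReal r) ^ γ := by
          rw [ENNReal.ofReal_mul (by norm_num), ENNReal.mul_rpow_of_ne_top
            ENNReal.ofReal_ne_top ENNReal.ofReal_ne_top]
        rw [h5]
        exact (mul_le_mul_right (min_le_right _ _) _).trans_eq (mul_comm _ _)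
    have hVc : (ENNReal.ofReal (r^m) * B) ^ c = (ENNReal.ofReal r) ^ ((m:ℝ)*c) * B ^ c := by
      rw [ENNReal.ofReal_pow hr.le, ENNReal.mul_rpow_of_ne_top
        (ENNReal.pow_ne_top ENNReal.ofReal_ne_top) hBt, ← ENNReal.rpow_natCast,
        ← ENNReal.rpow_mul]
    have hpow : (ENNReal.ofReal r) ^ (2 * (γ + (m:ℝ)*c))
        = ((ENNReal.ofReal r) ^ γ * (ENNReal.ofReal r) ^ ((m:ℝ)*c)) *
          ((ENNReal.ofReal r) ^ γ * (ENNReal.ofReal r) ^ ((m:ℝ)*c)) := by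
      rw [← ENNReal.rpow_add _ _ hr0 ENNReal.ofReal_ne_top,
        ← ENNReal.rpow_add _ _ hr0 ENNReal.ofReal_ne_top]
      congr 1
      ring
    calc C * (ENNReal.ofReal r) ^ (2 * (γ + (m:ℝ)*c))
        = ((ENNReal.ofReal r) ^ γ * M5) * ((ENNReal.ofReal r) ^ γ * M5) *
          (((ENNReal.ofReal r) ^ ((m:ℝ)*c) * B ^ c) *
           ((ENNReal.ofReal r) ^ ((m:ℝ)*c) * B ^ c)) * Cother := by
          rw [hC, hpow]; ring
      _ ≤ (min ((ENNReal.ofReal r) ^ γ) ((ENNReal.ofReal (5*r)) ^ γ)) *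
          (min ((ENNReal.ofReal r) ^ γ) ((ENNReal.ofReal (5*r)) ^ γ)) *
          ((ENNReal.ofReal (r^m) * B) ^ c * (ENNReal.ofReal (r^m) * B) ^ c) * Cother := by
          rw [hVc]
          exact mul_le_mul_left (mul_le_mul' (mul_le_mul' hKm hKm) le_rfl) _
      _ ≤ N2 := hbd r hr
  linarith


end AuxLemmas

open Metric Set in
/-- **Necessity of the balanced diagonal conditions in the one-weight case.**  If the
one-weight norm inequality `‖(I_{α,β} f) w‖_{L^q} ≤ N ‖f w‖_{L^p}` holds for all `f ≥ 0`
with a finite constant `N`, for some (everywhere positive and finite, measurable) weight `w`,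
where `1 < p, q < ∞` and `α, β > 0`, then necessarily `1/p − 1/q = α/m = β/n`. -/
theorem one_weight_balanced_diagonal (m n : ℕ) (hm : 0 < m) (hn : 0 < n)
    (α β p q : ℝ) (hα : 0 < α) (hβ : 0 < β) (hp : 1 < p) (hq : 1 < q)
    (w : E m × E n → ℝ≥0∞) (hwm : Measurable w) (hw : ∀ z, 0 < w z ∧ w z < ∞)
    (N : ℝ≥0∞) (hN : N ≠ ∞)
    (hineq : ∀ f : E m × E n → ℝ≥0∞, Measurable f →
      (∫⁻ z, (Iab m n α β f z * w z) ^ q) ^ (1 / q)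
        ≤ N * (∫⁻ z, (f z * w z) ^ p) ^ (1 / p)) :
    1 / p - 1 / q = α / (m : ℝ) ∧ α / (m : ℝ) = β / (n : ℝ) := by
  have hp0 : 0 < p := lt_trans one_pos hp
  have hq0 : 0 < q := lt_trans one_pos hq
  have hp1 : (0:ℝ) < p - 1 := by linarith
  set p' : ℝ := p / (p - 1) with hp'def
  have hp'pos : 0 < p' := by rw [hp'def]; positivity
  have hsum : 1/p' + 1/p = 1 := by rw [hp'def]; field_simp; ring
  set c : ℝ := 1/q + 1/p' with hcdef
  have hcpos : 0 < c := by positivity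
  set N' : ℝ≥0∞ := max N 1 with hN'def
  have hN't : N' ≠ ∞ := by rw [hN'def]; exact (max_lt hN.lt_top one_lt_top).ne
  have hineq' : ∀ f : E m × E n → ℝ≥0∞, Measurable f →
      (∫⁻ z, (Iab m n α β f z * w z) ^ q) ^ (1 / q)
        ≤ N' * (∫⁻ z, (f z * w z) ^ p) ^ (1 / p) :=
    fun f hf => (hineq f hf).trans (mul_le_mul_left (le_max_left N 1) _)
  haveI : Nontrivial (E m) :=
    Module.nontrivial_of_finrank_pos (R := ℝ) (by rw [finrank_euclideanSpace_fin]; exact hm)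
  haveI : Nontrivial (E n) :=
    Module.nontrivial_of_finrank_pos (R := ℝ) (by rw [finrank_euclideanSpace_fin]; exact hn)
  have hBm0 : volume (ball (0 : E m) 1) ≠ 0 := (measure_ball_pos _ _ one_pos).ne'
  have hBmt : volume (ball (0 : E m) 1) ≠ ∞ := measure_ball_lt_top.ne
  have hBn0 : volume (ball (0 : E n) 1) ≠ 0 := (measure_ball_pos _ _ one_pos).ne'
  have hBnt : volume (ball (0 : E n) 1) ≠ ∞ := measure_ball_lt_top.ne
  -- Hölder inequality for the weight on any set
  have holder : ∀ U : Set (E m × E n), (volume U) ^ c ≤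
      (∫⁻ z in U, w z ^ q) ^ (1/q) * (∫⁻ z in U, w z ^ (-p')) ^ (1/p') := by
    intro U
    rw [hcdef]
    have := aux_holder (volume.restrict U) hwm (fun z => ⟨(hw z).1.ne', (hw z).2.ne⟩)
      hp'pos hq0
    rwa [Measure.restrict_apply_univ] at this
  -- the two-sided testing bound, for all scales
  have bound : ∀ r r' : ℝ, 0 < r → 0 < r' →
      (min ((ENNReal.ofReal r) ^ (α - (m:ℝ))) ((ENNReal.ofReal (5*r)) ^ (α - (m:ℝ))) *
       min ((ENNReal.ofReal r') ^ (β - (n:ℝ))) ((ENNReal.ofReal (5*r')) ^ (β - (n:ℝ)))) *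
      (min ((ENNReal.ofReal r) ^ (α - (m:ℝ))) ((ENNReal.ofReal (5*r)) ^ (α - (m:ℝ))) *
       min ((ENNReal.ofReal r') ^ (β - (n:ℝ))) ((ENNReal.ofReal (5*r')) ^ (β - (n:ℝ)))) *
      ((ENNReal.ofReal (r^m) * volume (ball (0 : E m) 1) *
        (ENNReal.ofReal (r'^n) * volume (ball (0 : E n) 1))) ^ c *
       (ENNReal.ofReal (r^m) * volume (ball (0 : E m) 1) *
        (ENNReal.ofReal (r'^n) * volume (ball (0 : E n) 1))) ^ c) ≤ N' * N' := by
    intro r r' hr hr'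
    set v : E m := EuclideanSpace.single (⟨0, hm⟩ : Fin m) (3*r) with hv
    set v' : E n := EuclideanSpace.single (⟨0, hn⟩ : Fin n) (3*r') with hv'
    have hvx : ‖v - 0‖ = 3*r := by
      rw [sub_zero, hv, EuclideanSpace.norm_single, Real.norm_eq_abs,
        abs_of_pos (by linarith)]
    have hvx' : ‖(0:E m) - v‖ = 3*r := by rw [norm_sub_rev]; exact hvx
    have hvy : ‖v' - 0‖ = 3*r' := by
      rw [sub_zero, hv', EuclideanSpace.norm_single, Real.norm_eq_abs,
        abs_of_pos (by linarith)]
    have hvy' : ‖(0:E n) - v'‖ = 3*r' := by rw [norm_sub_rev]; exact hvy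
    have h1 := key_testing m n α β p q p' hp hq hp'def w hwm hw N' hineq'
      0 v 0 v' r r' hr hr' hvx hvy
    have h2 := key_testing m n α β p q p' hp hq hp'def w hwm hw N' hineq'
      v 0 v' 0 r r' hr hr' hvx' hvy'
    have hH1 := holder ((ball (0:E m) r) ×ˢ (ball (0:E n) r'))
    have hH2 := holder ((ball v r) ×ˢ (ball v' r'))
    have hvolT : volume ((ball (0:E m) r) ×ˢ (ball (0:E n) r'))
        = ENNReal.ofReal (r^m) * volume (ball (0 : E m) 1) *
          (ENNReal.ofReal (r'^n) * volume (ball (0 : E n) 1)) := by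
      rw [Measure.volume_eq_prod, Measure.prod_prod, Measure.addHaar_ball _ _ hr.le,
        Measure.addHaar_ball _ _ hr'.le, finrank_euclideanSpace_fin,
        finrank_euclideanSpace_fin]
    have hvolS : volume ((ball v r) ×ˢ (ball v' r'))
        = ENNReal.ofReal (r^m) * volume (ball (0 : E m) 1) *
          (ENNReal.ofReal (r'^n) * volume (ball (0 : E n) 1)) := by
      rw [Measure.volume_eq_prod, Measure.prod_prod, Measure.addHaar_ball _ _ hr.le,
        Measure.addHaar_ball _ _ hr'.le, finrank_euclideanSpace_fin,
        finrank_euclideanSpace_fin]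
    rw [hvolT] at hH1
    rw [hvolS] at hH2
    refine le_trans (mul_le_mul_right (mul_le_mul' hH1 hH2) _) ?_
    refine le_trans (le_of_eq ?_) (mul_le_mul' h1 h2)
    ring
  -- extraction of the first exponent identity
  have hKm10 : min ((ENNReal.ofReal (1:ℝ)) ^ (α - (m:ℝ)))
      ((ENNReal.ofReal (5*(1:ℝ))) ^ (α - (m:ℝ))) ≠ 0 :=
    (lt_min (ENNReal.rpow_pos (ENNReal.ofReal_pos.2 one_pos) ENNReal.ofReal_ne_top)
      (ENNReal.rpow_pos (ENNReal.ofReal_pos.2 (by norm_num)) ENNReal.ofReal_ne_top)).ne'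
  have hKm1t : min ((ENNReal.ofReal (1:ℝ)) ^ (α - (m:ℝ)))
      ((ENNReal.ofReal (5*(1:ℝ))) ^ (α - (m:ℝ))) ≠ ∞ :=
    ((min_le_left _ _).trans_lt (lt_top_iff_ne_top.2
      (aux_rpow_ne_top (ENNReal.ofReal_pos.2 one_pos).ne' ENNReal.ofReal_ne_top _))).ne
  have hKn10 : min ((ENNReal.ofReal (1:ℝ)) ^ (β - (n:ℝ)))
      ((ENNReal.ofReal (5*(1:ℝ))) ^ (β - (n:ℝ))) ≠ 0 :=
    (lt_min (ENNReal.rpow_pos (ENNReal.ofReal_pos.2 one_pos) ENNReal.ofReal_ne_top)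
      (ENNReal.rpow_pos (ENNReal.ofReal_pos.2 (by norm_num)) ENNReal.ofReal_ne_top)).ne'
  have hKn1t : min ((ENNReal.ofReal (1:ℝ)) ^ (β - (n:ℝ)))
      ((ENNReal.ofReal (5*(1:ℝ))) ^ (β - (n:ℝ))) ≠ ∞ :=
    ((min_le_left _ _).trans_lt (lt_top_iff_ne_top.2
      (aux_rpow_ne_top (ENNReal.ofReal_pos.2 one_pos).ne' ENNReal.ofReal_ne_top _))).ne
  have hα1 : (α - (m:ℝ)) + (m:ℝ) * c = 0 := by
    apply aux_scaling (α - (m:ℝ)) m c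
      (min ((ENNReal.ofReal (1:ℝ)) ^ (β - (n:ℝ))) ((ENNReal.ofReal (5*(1:ℝ))) ^ (β - (n:ℝ))) *
       min ((ENNReal.ofReal (1:ℝ)) ^ (β - (n:ℝ))) ((ENNReal.ofReal (5*(1:ℝ))) ^ (β - (n:ℝ))))
      (volume (ball (0 : E m) 1) * (ENNReal.ofReal ((1:ℝ)^n) * volume (ball (0 : E n) 1)))
      (N' * N') (mul_ne_zero hKn10 hKn10) (ENNReal.mul_ne_top hKn1t hKn1t)
      (mul_ne_zero hBm0 (mul_ne_zero (by simp) hBn0))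
      (ENNReal.mul_ne_top hBmt (ENNReal.mul_ne_top ENNReal.ofReal_ne_top hBnt))
      (ENNReal.mul_ne_top hN't hN't)
    intro r hr
    have hb := bound r 1 hr one_pos
    refine le_trans (le_of_eq ?_) hb
    rw [show ENNReal.ofReal (r^m) *
        (volume (ball (0 : E m) 1) * (ENNReal.ofReal ((1:ℝ)^n) * volume (ball (0 : E n) 1)))
        = ENNReal.ofReal (r^m) * volume (ball (0 : E m) 1) *
          (ENNReal.ofReal ((1:ℝ)^n) * volume (ball (0 : E n) 1)) from by ring]
    ring
  have hβ1 : (β - (n:ℝ)) + (n:ℝ) * c = 0 := by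
    apply aux_scaling (β - (n:ℝ)) n c
      (min ((ENNReal.ofReal (1:ℝ)) ^ (α - (m:ℝ))) ((ENNReal.ofReal (5*(1:ℝ))) ^ (α - (m:ℝ))) *
       min ((ENNReal.ofReal (1:ℝ)) ^ (α - (m:ℝ))) ((ENNReal.ofReal (5*(1:ℝ))) ^ (α - (m:ℝ))))
      (ENNReal.ofReal ((1:ℝ)^m) * volume (ball (0 : E m) 1) * volume (ball (0 : E n) 1))
      (N' * N') (mul_ne_zero hKm10 hKm10) (ENNReal.mul_ne_top hKm1t hKm1t)
      (mul_ne_zero (mul_ne_zero (by simp) hBm0) hBn0)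
      (ENNReal.mul_ne_top (ENNReal.mul_ne_top ENNReal.ofReal_ne_top hBmt) hBnt)
      (ENNReal.mul_ne_top hN't hN't)
    intro r' hr'
    have hb := bound 1 r' one_pos hr'
    refine le_trans (le_of_eq ?_) hb
    rw [show ENNReal.ofReal (r'^n) *
        (ENNReal.ofReal ((1:ℝ)^m) * volume (ball (0 : E m) 1) * volume (ball (0 : E n) 1))
        = ENNReal.ofReal ((1:ℝ)^m) * volume (ball (0 : E m) 1) *
          (ENNReal.ofReal (r'^n) * volume (ball (0 : E n) 1)) from by ring]
    ring
  -- final arithmetic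
  have hm0 : (0:ℝ) < m := Nat.cast_pos.2 hm
  have hn0 : (0:ℝ) < n := Nat.cast_pos.2 hn
  have hc' : c = 1/q + 1 - 1/p := by rw [hcdef]; linarith
  have hX : α / (m:ℝ) = 1/p - 1/q := by
    rw [div_eq_iff hm0.ne']
    have hαe : α = (m:ℝ) - (m:ℝ) * c := by linarith
    rw [hαe, hc']
    ring
  have hY : β / (n:ℝ) = 1/p - 1/q := by
    rw [div_eq_iff hn0.ne']
    have hβe : β = (n:ℝ) - (n:ℝ) * c := by linarith
    rw [hβe, hc']
    ring
  exact ⟨hX.symm, by rw [hX, hY]⟩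

end
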